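/- Let 0 ≤ d_c ≤ d−1, and let {a_i}_{i=1}^d and {b_j}_{j=1}^d be orthonormal bases of ℂ^d such that a_i = b_i for all i ≤ d_c, ⟨a_i, b_j⟩ = 0 whenever exactly one of i, j is ≤ d_c, and |⟨a_i, b_j⟩|² = 1/(d−d_c) whenever both i, j > d_c. Let E^A(ρ) = Σ_i |a_i⟩⟨a_i| ρ |a_i⟩⟨a_i| and E^B(ρ) = Σ_j |b_j⟩⟨b_j| ρ |b_j⟩⟨b_j|. Then Σ_{m=1}^{d} λ_max[E^A(|b_m⟩⟨b_m|) + E^B(|b_m⟩⟨b_m|)] ≥ d + d_c + 1, where λ_max denotes the largest eigenvalue of a Hermitian matrix. -/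

import Mathlib

open scoped BigOperators ComplexOrder
open Matrix

noncomputable section

/-- A projective observable: a finite family of mutually orthogonal
self-adjoint idempotents summing to the identity. -/
def IsProjObs {d r : ℕ} (P : Fin r → Matrix (Fin d) (Fin d) ℂ) : Prop :=
  (∀ i, (P i).IsHermitian) ∧ (∀ i, P i * P i = P i) ∧
    (∀ i k, i ≠ k → P i * P k = 0) ∧ (∑ i, P i = 1)

/-- A density matrix: positive semidefinite with unit trace. -/
def IsDensity {d : ℕ} (ρ : Matrix (Fin d) (Fin d) ℂ) : Prop :=
  ρ.PosSemidef ∧ ρ.trace = 1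

/-- The measurement channel `E^A(ρ) = Σ_i P_i ρ P_i` of a projective observable. -/
def measChannel {d r : ℕ} (P : Fin r → Matrix (Fin d) (Fin d) ℂ)
    (ρ : Matrix (Fin d) (Fin d) ℂ) : Matrix (Fin d) (Fin d) ℂ :=
  ∑ i, P i * ρ * P i

/-- `p^B_ρ(j) = tr(P^B_j ρ)`. -/
def probB {d rB : ℕ} (Q : Fin rB → Matrix (Fin d) (Fin d) ℂ)
    (ρ : Matrix (Fin d) (Fin d) ℂ) (j : Fin rB) : ℝ :=
  ((Q j * ρ).trace).re

/-- `q^{A→B}_ρ(j) = tr(P^B_j Σ_i P^A_i ρ P^A_i)`. -/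
def probAB {d rA rB : ℕ} (P : Fin rA → Matrix (Fin d) (Fin d) ℂ)
    (Q : Fin rB → Matrix (Fin d) (Fin d) ℂ)
    (ρ : Matrix (Fin d) (Fin d) ℂ) (j : Fin rB) : ℝ :=
  ((Q j * measChannel P ρ).trace).re

open Classical in
/-- The positive semidefinite square root of a PSD matrix (junk value `0` otherwise). -/
noncomputable def msqrt {d : ℕ} (A : Matrix (Fin d) (Fin d) ℂ) :
    Matrix (Fin d) (Fin d) ℂ :=
  if h : A.PosSemidef then
    h.1.eigenvectorUnitary.1 * diagonal ((↑) ∘ (Real.sqrt ∘ h.1.eigenvalues)) *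
      (star h.1.eigenvectorUnitary : Matrix (Fin d) (Fin d) ℂ)
  else 0

/-- `|X| = √(Xᴴ X)`, the positive semidefinite absolute value of a matrix. -/
noncomputable def matAbs {d : ℕ} (X : Matrix (Fin d) (Fin d) ℂ) :
    Matrix (Fin d) (Fin d) ℂ :=
  msqrt (Xᴴ * X)

/-- The quantum fidelity `F(ρ,σ) = tr √(√ρ σ √ρ)`. -/
noncomputable def qFid {d : ℕ} (ρ σ : Matrix (Fin d) (Fin d) ℂ) : ℝ :=
  ((msqrt (msqrt ρ * σ * msqrt ρ)).trace).re

/-- Variational distance `D_1(p,q) = (1/2) Σ_j |p_j − q_j|`. -/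
def distL1 {rB : ℕ} (p q : Fin rB → ℝ) : ℝ := (1 / 2) * ∑ j, |p j - q j|

/-- Chebyshev distance `D_∞(p,q) = max_j |p_j − q_j|`. -/
noncomputable def distLinf {rB : ℕ} (p q : Fin rB → ℝ) : ℝ := ⨆ j, |p j - q j|

/-- Classical fidelity `F(p,q) = Σ_j √(p_j q_j)`. -/
noncomputable def classFid {rB : ℕ} (p q : Fin rB → ℝ) : ℝ :=
  ∑ j, Real.sqrt (p j * q j)

/-- `Q_1(A→B)`. -/
noncomputable def Q1 {d rA rB : ℕ} (P : Fin rA → Matrix (Fin d) (Fin d) ℂ)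
    (Q : Fin rB → Matrix (Fin d) (Fin d) ℂ) : ℝ :=
  sSup {x : ℝ | ∃ ρ, IsDensity ρ ∧ x = distL1 (probAB P Q ρ) (probB Q ρ)}

/-- `Q_∞(A→B)`. -/
noncomputable def Qinf {d rA rB : ℕ} (P : Fin rA → Matrix (Fin d) (Fin d) ℂ)
    (Q : Fin rB → Matrix (Fin d) (Fin d) ℂ) : ℝ :=
  sSup {x : ℝ | ∃ ρ, IsDensity ρ ∧ x = distLinf (probAB P Q ρ) (probB Q ρ)}

/-- `Q_F(A→B)`. -/
noncomputable def QF {d rA rB : ℕ} (P : Fin rA → Matrix (Fin d) (Fin d) ℂ)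
    (Q : Fin rB → Matrix (Fin d) (Fin d) ℂ) : ℝ :=
  sSup {x : ℝ | ∃ ρ, IsDensity ρ ∧
    x = 1 - (classFid (probAB P Q ρ) (probB Q ρ)) ^ 2}

/-- The rank-one projection `|v⟩⟨v|` onto a (unit) vector `v`. -/
def proj {d : ℕ} (v : Fin d → ℂ) : Matrix (Fin d) (Fin d) ℂ :=
  Matrix.vecMulVec v (star v)

open Classical in
/-- The largest eigenvalue of a Hermitian matrix (junk value `0` otherwise). -/
noncomputable def lamMax {d : ℕ} (M : Matrix (Fin d) (Fin d) ℂ) : ℝ :=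
  if h : M.IsHermitian then ⨆ k, h.eigenvalues k else 0


section Aux

lemma proj_mulVec {d : ℕ} (u x : Fin d → ℂ) :
    proj u *ᵥ x = (star u ⬝ᵥ x) • u := by
  funext i
  simp only [proj, mulVec, vecMulVec_apply, dotProduct, Pi.smul_apply, smul_eq_mul,
    Finset.sum_mul, Pi.star_apply]
  exact Finset.sum_congr rfl fun j _ => by ring

lemma proj_isHermitian {d : ℕ} (u : Fin d → ℂ) : (proj u).IsHermitian := by
  show (proj u)ᴴ = proj u
  ext i j
  simp [proj, vecMulVec_apply, conjTranspose_apply, mul_comm]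

lemma measChannel_isHermitian {d r : ℕ} (P : Fin r → Matrix (Fin d) (Fin d) ℂ)
    (hP : ∀ i, (P i).IsHermitian) (ρ : Matrix (Fin d) (Fin d) ℂ) (hρ : ρ.IsHermitian) :
    (measChannel P ρ).IsHermitian := by
  show _ᴴ = _
  simp only [measChannel, conjTranspose_sum, conjTranspose_mul]
  refine Finset.sum_congr rfl fun i _ => ?_
  rw [hP i, hρ, mul_assoc]

lemma rayleigh_le_lamMax {d : ℕ} (hd : 0 < d) {M : Matrix (Fin d) (Fin d) ℂ}
    (hM : M.IsHermitian) (v : Fin d → ℂ) (hv : star v ⬝ᵥ v = 1) :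
    (star v ⬝ᵥ M *ᵥ v).re ≤ lamMax M := by
  classical
  have : Nonempty (Fin d) := ⟨⟨0, hd⟩⟩
  rw [lamMax, dif_pos hM]
  set U : Matrix (Fin d) (Fin d) ℂ := (hM.eigenvectorUnitary : Matrix (Fin d) (Fin d) ℂ) with hU
  set w : Fin d → ℂ := star U *ᵥ v with hw
  have hvU : star v ᵥ* U = star w := by
    rw [hw, star_mulVec, star_eq_conjTranspose, conjTranspose_conjTranspose]
  have hkey : star v ⬝ᵥ M *ᵥ v
      = star w ⬝ᵥ (diagonal (RCLike.ofReal ∘ hM.eigenvalues) : Matrix (Fin d) (Fin d) ℂ) *ᵥ w := by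
    conv_lhs => rw [hM.spectral_theorem, Unitary.conjStarAlgAut_apply]
    rw [← hU, ← mulVec_mulVec, ← mulVec_mulVec, dotProduct_mulVec, hvU, ← hw]
  have hnorm : star w ⬝ᵥ w = 1 := by
    have h1 : star w ⬝ᵥ w = (star v ᵥ* U) ⬝ᵥ (star U *ᵥ v) := by rw [hvU]
    rw [h1, dotProduct_mulVec, vecMul_vecMul,
      (Matrix.mem_unitaryGroup_iff).mp hM.eigenvectorUnitary.2, vecMul_one, hv]
  have hdiag : star w ⬝ᵥ (diagonal (RCLike.ofReal ∘ hM.eigenvalues) : Matrix (Fin d) (Fin d) ℂ) *ᵥ w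
      = ∑ k, (hM.eigenvalues k : ℂ) * ((Complex.normSq (w k) : ℂ)) := by
    simp only [mulVec_diagonal, dotProduct, Pi.star_apply, Function.comp_apply]
    refine Finset.sum_congr rfl fun k _ => ?_
    rw [show star (w k) * (RCLike.ofReal (hM.eigenvalues k) * w k)
        = RCLike.ofReal (hM.eigenvalues k) * (star (w k) * w k) from by ring,
      RCLike.star_def, ← Complex.normSq_eq_conj_mul_self]
    norm_num [RCLike.ofReal_alg]
  rw [hkey, hdiag]
  have hre : (∑ k, (hM.eigenvalues k : ℂ) * ((Complex.normSq (w k) : ℂ))).re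
      = ∑ k, hM.eigenvalues k * Complex.normSq (w k) := by
    rw [Complex.re_sum]
    refine Finset.sum_congr rfl fun k _ => ?_
    rw [← Complex.ofReal_mul, Complex.ofReal_re]
  rw [hre]
  have hnorm' : ∑ k, Complex.normSq (w k) = 1 := by
    have h2 : (star w ⬝ᵥ w).re = 1 := by rw [hnorm]; simp
    rw [← h2]
    simp only [dotProduct, Pi.star_apply, Complex.re_sum]
    refine Finset.sum_congr rfl fun k _ => ?_
    rw [RCLike.star_def, ← Complex.normSq_eq_conj_mul_self, Complex.ofReal_re]
  have hle : ∀ k, hM.eigenvalues k ≤ ⨆ j, hM.eigenvalues j := fun k =>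
    le_ciSup (Set.Finite.bddAbove (Set.finite_range _)) k
  calc ∑ k, hM.eigenvalues k * Complex.normSq (w k)
      ≤ ∑ k, (⨆ j, hM.eigenvalues j) * Complex.normSq (w k) :=
        Finset.sum_le_sum fun k _ =>
          mul_le_mul_of_nonneg_right (hle k) (Complex.normSq_nonneg _)
    _ = (⨆ j, hM.eigenvalues j) * ∑ k, Complex.normSq (w k) := by
        rw [Finset.mul_sum]
    _ = ⨆ j, hM.eigenvalues j := by rw [hnorm', mul_one]

lemma dot_triple {d : ℕ} (u w v : Fin d → ℂ) :
    star v ⬝ᵥ (proj u * proj w * proj u) *ᵥ v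
      = (star u ⬝ᵥ v) * (star w ⬝ᵥ u) * (star u ⬝ᵥ w) * (star v ⬝ᵥ u) := by
  rw [← mulVec_mulVec, ← mulVec_mulVec]
  simp only [proj_mulVec, mulVec_smul, dotProduct_smul, smul_eq_mul, smul_smul]

lemma rayleigh_measChannel {d r : ℕ} (c : Fin r → (Fin d → ℂ)) (w v : Fin d → ℂ) :
    star v ⬝ᵥ (measChannel (fun i => proj (c i)) (proj w)) *ᵥ v
      = ∑ i, (star (c i) ⬝ᵥ v) * (star w ⬝ᵥ c i) * (star (c i) ⬝ᵥ w) * (star v ⬝ᵥ c i) := by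
  let φ : Matrix (Fin d) (Fin d) ℂ →+ ℂ :=
    { toFun := fun M => star v ⬝ᵥ M *ᵥ v,
      map_zero' := by simp,
      map_add' := fun A B => by simp [add_mulVec, dotProduct_add] }
  have : star v ⬝ᵥ (measChannel (fun i => proj (c i)) (proj w)) *ᵥ v
      = ∑ i, star v ⬝ᵥ (proj (c i) * proj w * proj (c i)) *ᵥ v :=
    map_sum φ (fun i => proj (c i) * proj w * proj (c i)) Finset.univ
  rw [this]
  exact Finset.sum_congr rfl fun i _ => dot_triple _ _ _

lemma card_filter_ge' {d dc : ℕ} (h : dc < d) :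
    (Finset.univ.filter (fun i : Fin d => dc ≤ (i:ℕ))).card = d - dc := by
  have he : (Finset.univ.filter (fun i : Fin d => dc ≤ (i:ℕ))) = Finset.Ici (⟨dc, h⟩ : Fin d) := by
    ext i; simp [Fin.le_def]
  rw [he, Fin.card_Ici]

lemma card_filter_lt' {d dc : ℕ} (h : dc < d) :
    (Finset.univ.filter (fun i : Fin d => (i:ℕ) < dc)).card = dc := by
  have he : (Finset.univ.filter (fun i : Fin d => (i:ℕ) < dc)) = Finset.Iio (⟨dc, h⟩ : Fin d) := by
    ext i; simp [Fin.lt_def]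
  rw [he, Fin.card_Iio]

end Aux

theorem stmt_15 {d dc : ℕ} (hd : 0 < d) (hdc : dc ≤ d - 1)
    (a b : Fin d → (Fin d → ℂ))
    (ha : ∀ i j, star (a i) ⬝ᵥ a j = if i = j then 1 else 0)
    (hb : ∀ i j, star (b i) ⬝ᵥ b j = if i = j then 1 else 0)
    (hcomm : ∀ i : Fin d, (i : ℕ) < dc → a i = b i)
    (horth : ∀ i j : Fin d,
      (((i : ℕ) < dc ∧ dc ≤ (j : ℕ)) ∨ (dc ≤ (i : ℕ) ∧ (j : ℕ) < dc)) →
        star (a i) ⬝ᵥ b j = 0)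
    (hmub : ∀ i j : Fin d, dc ≤ (i : ℕ) → dc ≤ (j : ℕ) →
      Complex.normSq (star (a i) ⬝ᵥ b j) = 1 / ((d : ℝ) - (dc : ℝ))) :
    ∑ m : Fin d,
        lamMax (measChannel (fun i => proj (a i)) (proj (b m)) +
          measChannel (fun j => proj (b j)) (proj (b m)))
      ≥ (d : ℝ) + (dc : ℝ) + 1 := by
  classical
  have hdlt : dc < d := by omega
  have hpos : (0:ℝ) < (d:ℝ) - (dc:ℝ) := by
    have h1 : (dc:ℝ) < (d:ℝ) := by exact_mod_cast hdlt
    linarith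
  have hmain : ∀ m : Fin d,
      (1:ℝ) + (if (m:ℕ) < dc then 1 else 1/((d:ℝ)-(dc:ℝ)))
        ≤ lamMax (measChannel (fun i => proj (a i)) (proj (b m)) +
            measChannel (fun j => proj (b j)) (proj (b m))) := by
    intro m
    set M := measChannel (fun i => proj (a i)) (proj (b m)) +
      measChannel (fun j => proj (b j)) (proj (b m)) with hMdef
    have hherm : M.IsHermitian :=
      (measChannel_isHermitian _ (fun i => proj_isHermitian _) _ (proj_isHermitian _)).add
        (measChannel_isHermitian _ (fun i => proj_isHermitian _) _ (proj_isHermitian _))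
    have hbm : star (b m) ⬝ᵥ b m = 1 := by simpa using hb m m
    refine le_trans ?_ (rayleigh_le_lamMax hd hherm (b m) hbm)
    have hsplit : star (b m) ⬝ᵥ M *ᵥ (b m)
        = (∑ i, (star (a i) ⬝ᵥ b m) * (star (b m) ⬝ᵥ a i) * (star (a i) ⬝ᵥ b m) *
            (star (b m) ⬝ᵥ a i))
          + ∑ j, (star (b j) ⬝ᵥ b m) * (star (b m) ⬝ᵥ b j) * (star (b j) ⬝ᵥ b m) *
            (star (b m) ⬝ᵥ b j) := by
      rw [hMdef, add_mulVec, dotProduct_add, rayleigh_measChannel, rayleigh_measChannel]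
    have hBsum : (∑ j : Fin d, (star (b j) ⬝ᵥ b m) * (star (b m) ⬝ᵥ b j) *
        (star (b j) ⬝ᵥ b m) * (star (b m) ⬝ᵥ b j)) = 1 := by
      rw [Finset.sum_eq_single m]
      · simp [hb]
      · intro j _ hj
        rw [hb j m, if_neg hj]; ring
      · simp
    have hAterm : ∀ i, (star (a i) ⬝ᵥ b m) * (star (b m) ⬝ᵥ a i) * (star (a i) ⬝ᵥ b m) *
        (star (b m) ⬝ᵥ a i) = ((Complex.normSq (star (a i) ⬝ᵥ b m) : ℝ) : ℂ)^2 := by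
      intro i
      rw [star_dotProduct (b m) (a i),
        show (star (a i) ⬝ᵥ b m) * star (star (a i) ⬝ᵥ b m) * (star (a i) ⬝ᵥ b m) *
            star (star (a i) ⬝ᵥ b m)
          = ((star (a i) ⬝ᵥ b m) * star (star (a i) ⬝ᵥ b m))^2 from by ring,
        RCLike.star_def, Complex.mul_conj]
    have hval : (star (b m) ⬝ᵥ M *ᵥ (b m)).re
        = (∑ i, (Complex.normSq (star (a i) ⬝ᵥ b m))^2) + 1 := by
      rw [hsplit, hBsum, Finset.sum_congr rfl (fun i _ => hAterm i), Complex.add_re,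
        Complex.one_re, Complex.re_sum]
      congr 1
      exact Finset.sum_congr rfl fun i _ => by rw [← Complex.ofReal_pow, Complex.ofReal_re]
    rw [hval]
    have hnn : ∀ i : Fin d, 0 ≤ (Complex.normSq (star (a i) ⬝ᵥ b m))^2 := fun i => sq_nonneg _
    by_cases hm : (m:ℕ) < dc
    · rw [if_pos hm]
      have h1 : (Complex.normSq (star (a m) ⬝ᵥ b m))^2 = 1 := by
        rw [hcomm m hm]
        simp [hb]
      have h2 := Finset.single_le_sum (f := fun i => (Complex.normSq (star (a i) ⬝ᵥ b m))^2)
        (fun i _ => hnn i) (Finset.mem_univ m)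
      simp only [h1] at h2
      linarith
    · rw [if_neg hm]
      push_neg at hm
      have hsub : ∑ i ∈ Finset.univ.filter (fun i : Fin d => dc ≤ (i:ℕ)),
            (Complex.normSq (star (a i) ⬝ᵥ b m))^2
          ≤ ∑ i, (Complex.normSq (star (a i) ⬝ᵥ b m))^2 :=
        Finset.sum_le_sum_of_subset_of_nonneg (Finset.filter_subset _ _) (fun i _ _ => hnn i)
      have hval2 : ∑ i ∈ Finset.univ.filter (fun i : Fin d => dc ≤ (i:ℕ)),
            (Complex.normSq (star (a i) ⬝ᵥ b m))^2 = 1/((d:ℝ)-(dc:ℝ)) := by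
        rw [Finset.sum_congr rfl (fun i hi => by
          rw [hmub i m (Finset.mem_filter.mp hi).2 hm]), Finset.sum_const,
          card_filter_ge' hdlt, nsmul_eq_mul]
        rw [Nat.cast_sub (le_of_lt hdlt)]
        field_simp
      rw [hval2] at hsub
      linarith
  have hsum : ∑ m : Fin d, ((1:ℝ) + (if (m:ℕ) < dc then 1 else 1/((d:ℝ)-(dc:ℝ))))
      = (d:ℝ) + (dc:ℝ) + 1 := by
    rw [Finset.sum_add_distrib, Finset.sum_const, Finset.card_univ, Fintype.card_fin,
      nsmul_eq_mul, mul_one, Finset.sum_ite, Finset.sum_const, Finset.sum_const,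
      card_filter_lt' hdlt]
    have hc2 : (Finset.univ.filter (fun m : Fin d => ¬ (m:ℕ) < dc)).card = d - dc := by
      rw [← card_filter_ge' hdlt]
      congr 1
      exact Finset.filter_congr fun i _ => by simp [not_lt]
    rw [hc2, nsmul_eq_mul, nsmul_eq_mul, mul_one, Nat.cast_sub (le_of_lt hdlt)]
    have : ((d:ℝ) - (dc:ℝ)) * (1/((d:ℝ)-(dc:ℝ))) = 1 := by
      field_simp
    rw [this]
    ring
  calc ∑ m : Fin d,
        lamMax (measChannel (fun i => proj (a i)) (proj (b m)) +
          measChannel (fun j => proj (b j)) (proj (b m)))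
      ≥ ∑ m : Fin d, ((1:ℝ) + (if (m:ℕ) < dc then 1 else 1/((d:ℝ)-(dc:ℝ)))) :=
        Finset.sum_le_sum fun m _ => hmain m
    _ = (d:ℝ) + (dc:ℝ) + 1 := hsum

end
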